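/- For every real x ≥ 1, the harmonic number satisfies the integral identity H(x) = (⌊x⌋ + ⌊x⌋²)/(2x²) + ∫_{1}^{x} (⌊y⌋ + ⌊y⌋²)/y³ dy, where H(x) = Σ_{n=1}^{⌊x⌋} 1/n. -/

import Mathlib

open MeasureTheory Finset intervalIntegral

lemma sum_Icc_id_cast (n : ℕ) :
    ∑ k ∈ Finset.Icc 0 n, (k : ℝ) = ((n : ℝ) + (n : ℝ) ^ 2) / 2 := by
  induction n with
  | zero => simp
  | succ n ih =>
      rw [Finset.sum_Icc_succ_top (Nat.zero_le _), ih]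
      push_cast
      ring

/-- For `x ≥ 1`, the harmonic number satisfies
`H(x) = (⌊x⌋ + ⌊x⌋²)/(2x²) + ∫_{1}^{x} (⌊y⌋ + ⌊y⌋²)/y³ dy`. -/
theorem harmonic_number_integral_identity
    (H : ℝ → ℝ)
    (hH : ∀ t, H t = ∑ n ∈ Finset.Icc 1 ⌊t⌋₊, ((n : ℝ))⁻¹)
    (x : ℝ) (hx : 1 ≤ x) :
    H x = ((⌊x⌋₊ : ℝ) + (⌊x⌋₊ : ℝ) ^ 2) / (2 * x ^ 2)
        + ∫ y in (1 : ℝ)..x, ((⌊y⌋₊ : ℝ) + (⌊y⌋₊ : ℝ) ^ 2) / y ^ 3 := by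
  set f : ℝ → ℝ := fun t => (t ^ 2)⁻¹ with hf
  have hderiv : ∀ t : ℝ, t ≠ 0 → HasDerivAt f (-2 / t ^ 3) t := by
    intro t ht
    have h := (hasDerivAt_pow 2 t).inv (pow_ne_zero 2 ht)
    refine HasDerivAt.congr_deriv h ?_
    field_simp
    ring
  have hdiff : ∀ t ∈ Set.Icc (1:ℝ) x, DifferentiableAt ℝ f t := by
    intro t ht
    exact (hderiv t (by linarith [ht.1])).differentiableAt
  have hderiv' : ∀ t : ℝ, t ≠ 0 → deriv f t = -2 / t ^ 3 := fun t ht =>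
    (hderiv t ht).deriv
  have hint : IntegrableOn (deriv f) (Set.Icc (1:ℝ) x) := by
    have hc : ContinuousOn (fun t : ℝ => -2 / t ^ 3) (Set.Icc 1 x) := by
      apply ContinuousOn.div continuousOn_const (by fun_prop)
      intro t ht
      have : (0:ℝ) < t := lt_of_lt_of_le zero_lt_one ht.1
      positivity
    refine (hc.integrableOn_Icc).congr_fun ?_ measurableSet_Icc
    intro t ht
    exact (hderiv' t (by nlinarith [ht.1])).symm
  have key := sum_mul_eq_sub_sub_integral_mul (c := fun n : ℕ => (n : ℝ)) (f := f)
    (a := 1) (b := x) zero_le_one hx hdiff hint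
  rw [Nat.floor_one] at key
  have hfl : 1 ≤ ⌊x⌋₊ := Nat.le_floor (by exact_mod_cast hx)
  -- the sum side
  have hsum : ∑ k ∈ Finset.Ioc 1 ⌊x⌋₊, f k * (k : ℝ) = H x - 1 := by
    rw [hH x, Finset.Icc_eq_cons_Ioc hfl, Finset.sum_cons]
    have : ∀ k ∈ Finset.Ioc 1 ⌊x⌋₊, f (k : ℝ) * (k : ℝ) = ((k : ℝ))⁻¹ := by
      intro k hk
      have hk1 : 1 < k := (Finset.mem_Ioc.mp hk).1
      have : (k : ℝ) ≠ 0 := by positivity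
      simp only [hf]
      field_simp
    rw [Finset.sum_congr rfl this]
    push_cast
    ring
  have hS : ∀ n : ℕ, ∑ k ∈ Finset.Icc 0 n, (k : ℝ) = ((n : ℝ) + (n : ℝ) ^ 2) / 2 :=
    sum_Icc_id_cast
  rw [hsum] at key
  simp only [hS, Nat.cast_one] at key
  -- the integral side
  have hintg : ∫ t in Set.Ioc (1:ℝ) x, deriv f t * ((↑⌊t⌋₊ + (↑⌊t⌋₊ : ℝ) ^ 2) / 2)
      = - ∫ y in (1:ℝ)..x, ((⌊y⌋₊ : ℝ) + (⌊y⌋₊ : ℝ) ^ 2) / y ^ 3 := by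
    rw [intervalIntegral.integral_of_le hx, ← MeasureTheory.integral_neg]
    refine setIntegral_congr_fun measurableSet_Ioc ?_
    intro t ht
    have ht0 : (0:ℝ) < t := lt_trans zero_lt_one ht.1
    dsimp only
    rw [hderiv' t (ne_of_gt ht0)]
    field_simp
  rw [hintg] at key
  have hx0 : x ≠ 0 := by positivity
  have hfx : f x * ((↑⌊x⌋₊ + (↑⌊x⌋₊ : ℝ) ^ 2) / 2)
      = ((⌊x⌋₊ : ℝ) + (⌊x⌋₊ : ℝ) ^ 2) / (2 * x ^ 2) := by
    field_simp [hf]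
    simp only [hf]
    field_simp
  rw [hfx] at key
  have h1 : f 1 * (((1:ℝ) + (1:ℝ) ^ 2) / 2) = 1 := by norm_num [hf]
  rw [h1] at key
  linarith [key]
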